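/- arXiv:2301.12384 — 2 statements merged into one kernel-verified Lean document; each statement's English description precedes it below -/
import Mathlib

section
/- The set M_{PSh}(X,φ) of Borel probability measures compatible with the persistent shadowing property for φ is an F_{σδ} subset of M(X) (a countable intersection of countable unions of closed sets) with respect to the weak* topology. -/
open MeasureTheory

def ContGroupAction (G : Type*) [Group G] (X : Type*) [MetricSpace X] (φ : G → X → X) : Prop :=
  (∀ g : G, Continuous (φ g)) ∧ (∀ g h : G, ∀ x : X, φ (g * h) x = φ g (φ h x)) ∧
    (∀ x : X, φ (1 : G) x = x)

def IsPseudoOrbit {G : Type*} [Group G] {X : Type*} [MetricSpace X]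
    (S : Set G) (ψ : G → X → X) (δ : ℝ) (f : G → X) : Prop :=
  ∀ s ∈ S, ∀ g : G, dist (f (s * g)) (ψ s (f g)) < δ

def CloseActions {G : Type*} [Group G] {X : Type*} [MetricSpace X]
    (S : Set G) (φ ψ : G → X → X) (δ : ℝ) : Prop :=
  ∀ s ∈ S, ∀ x : X, dist (φ s x) (ψ s x) < δ

def PersistentShadowing {G : Type*} [Group G] {X : Type*} [MetricSpace X]
    (S : Set G) (φ : G → X → X) : Prop :=
  ∀ ε > (0:ℝ), ∃ δ > (0:ℝ), ∀ ψ : G → X → X, ContGroupAction G X ψ → CloseActions S φ ψ δ →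
    ∀ f : G → X, IsPseudoOrbit S ψ δ f → ∃ p : X, ∀ g : G, dist (f g) (ψ g p) < ε

def Shadowing {G : Type*} [Group G] {X : Type*} [MetricSpace X]
    (S : Set G) (φ : G → X → X) : Prop :=
  ∀ ε > (0:ℝ), ∃ δ > (0:ℝ), ∀ f : G → X, IsPseudoOrbit S φ δ f →
    ∃ p : X, ∀ g : G, dist (f g) (φ g p) < ε

def PShSet {G : Type*} [Group G] {X : Type*} [MetricSpace X]
    (S : Set G) (φ : G → X → X) (δ ε : ℝ) : Set X :=
  {x | ∀ ψ : G → X → X, ContGroupAction G X ψ → CloseActions S φ ψ δ →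
    ∀ f : G → X, IsPseudoOrbit S ψ δ f → f 1 = x →
      ∃ p : X, ∀ g : G, dist (f g) (ψ g p) < ε}

def PShPoint {G : Type*} [Group G] {X : Type*} [MetricSpace X]
    (S : Set G) (φ : G → X → X) (x : X) : Prop :=
  ∀ ε > (0:ℝ), ∃ δ > (0:ℝ), x ∈ PShSet S φ δ ε

def ShPoint {G : Type*} [Group G] {X : Type*} [MetricSpace X]
    (S : Set G) (φ : G → X → X) (x : X) : Prop :=
  ∀ ε > (0:ℝ), ∃ δ > (0:ℝ), ∀ f : G → X, IsPseudoOrbit S φ δ f → f 1 = x →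
    ∃ p : X, ∀ g : G, dist (f g) (φ g p) < ε

def UPersisBetaPoint {G : Type*} [Group G] {X : Type*} [MetricSpace X]
    (S : Set G) (φ : G → X → X) (x : X) : Prop :=
  ∀ ε > (0:ℝ), ∃ δ > (0:ℝ), ∀ ψ : G → X → X, ContGroupAction G X ψ → CloseActions S φ ψ δ →
    ∀ x' : X, dist x' x < δ → ∃ y : X, ∀ g : G, dist (φ g x') (ψ g y) < ε

def BetaPersistent {G : Type*} [Group G] {X : Type*} [MetricSpace X]
    (S : Set G) (φ : G → X → X) : Prop :=
  ∀ ε > (0:ℝ), ∃ δ > (0:ℝ), ∀ ψ : G → X → X, ContGroupAction G X ψ → CloseActions S φ ψ δ →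
    ∀ x : X, ∃ y : X, ∀ g : G, dist (φ g x) (ψ g y) < ε

def CompatiblePSh {G : Type*} [Group G] {X : Type*} [MetricSpace X] [MeasurableSpace X]
    (S : Set G) (φ : G → X → X) (μ : Measure X) : Prop :=
  ∀ ε > (0:ℝ), ∃ δ > (0:ℝ), ∀ A : Set X, MeasurableSet A → 0 < μ A →
    (A ∩ PShSet S φ δ ε).Nonempty

def MeasSupp {X : Type*} [MetricSpace X] [MeasurableSpace X] (μ : Measure X) : Set X :=
  {x | ∀ U : Set X, IsOpen U → x ∈ U → 0 < μ U}

open scoped ENNReal in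
open Filter Topology in
lemma aux_isClosed_prob_ge {X : Type*} [MetricSpace X] [MeasurableSpace X] [BorelSpace X]
    {K : Set X} (hK : IsClosed K) :
    IsClosed {μ : ProbabilityMeasure X | (1 : ℝ≥0∞) ≤ (μ : Measure X) K} := by
  rw [← closure_subset_iff_isClosed]
  intro μ hμ
  haveI : (𝓝[{ν : ProbabilityMeasure X | (1 : ℝ≥0∞) ≤ (ν : Measure X) K}] μ).NeBot :=
    mem_closure_iff_nhdsWithin_neBot.mp hμ
  have htend : Tendsto (id : ProbabilityMeasure X → ProbabilityMeasure X)
      (𝓝[{ν : ProbabilityMeasure X | (1 : ℝ≥0∞) ≤ (ν : Measure X) K}] μ) (𝓝 μ) :=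
    tendsto_id.mono_left nhdsWithin_le_nhds
  have hlim := MeasureTheory.ProbabilityMeasure.limsup_measure_closed_le_of_tendsto htend hK
  refine le_trans ?_ hlim
  apply le_limsup_of_frequently_le'
  exact Filter.Eventually.frequently
    (f := 𝓝[{ν : ProbabilityMeasure X | (1 : ℝ≥0∞) ≤ (ν : Measure X) K}] μ)
    (eventually_mem_nhdsWithin.mono (fun ν hν => hν))

lemma PShSet_anti {G : Type*} [Group G] {X : Type*} [MetricSpace X]
    (S : Set G) (φ : G → X → X) {δ δ' ε : ℝ} (h : δ' ≤ δ) :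
    PShSet S φ δ ε ⊆ PShSet S φ δ' ε := by
  intro x hx ψ hψ hcl f hf hf1
  exact hx ψ hψ (fun s hs y => lt_of_lt_of_le (hcl s hs y) h) f
    (fun s hs g => lt_of_lt_of_le (hf s hs g) h) hf1

lemma PShSet_mono {G : Type*} [Group G] {X : Type*} [MetricSpace X]
    (S : Set G) (φ : G → X → X) {δ ε ε' : ℝ} (h : ε' ≤ ε) :
    PShSet S φ δ ε' ⊆ PShSet S φ δ ε := by
  intro x hx ψ hψ hcl f hf hf1
  obtain ⟨p, hp⟩ := hx ψ hψ hcl f hf hf1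
  exact ⟨p, fun g => lt_of_lt_of_le (hp g) h⟩

open Filter Topology in
lemma closure_PShSet_subset {G : Type*} [Group G] {X : Type*} [MetricSpace X]
    (S : Set G) (hSfin : S.Finite) (φ : G → X → X) {δ ε ε' : ℝ} (h : ε' < ε) :
    closure (PShSet S φ δ ε') ⊆ PShSet S φ δ ε := by
  classical
  intro x hx ψ hψ hcl f hf hf1
  -- the finitely many constraints involving the value of f at 1 hold with strict margin
  have hev : ∀ᶠ x' in 𝓝 x, dist x' x < ε - ε' ∧
      ∀ s ∈ S, dist (f s) (ψ s x') < δ ∧ dist x' (ψ s (f s⁻¹)) < δ := by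
    have h1 : ∀ᶠ x' in 𝓝 x, dist x' x < ε - ε' := by
      have : Tendsto (fun x' => dist x' x) (𝓝 x) (𝓝 (dist x x)) :=
        (continuous_id.dist continuous_const).tendsto x
      rw [dist_self] at this
      exact this.eventually_lt_const (by linarith)
    have h2 : ∀ᶠ x' in 𝓝 x, ∀ s ∈ S, dist (f s) (ψ s x') < δ ∧ dist x' (ψ s (f s⁻¹)) < δ := by
      rw [eventually_all_finite hSfin]
      intro s hs
      have ha : dist (f s) (ψ s x) < δ := by
        have := hf s hs 1; rwa [mul_one, hf1] at this
      have hb : dist x (ψ s (f s⁻¹)) < δ := by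
        have := hf s hs s⁻¹; rwa [mul_inv_cancel, hf1] at this
      have ta : Tendsto (fun x' => dist (f s) (ψ s x')) (𝓝 x) (𝓝 (dist (f s) (ψ s x))) :=
        (continuous_const.dist (hψ.1 s)).tendsto x
      have tb : Tendsto (fun x' => dist x' (ψ s (f s⁻¹))) (𝓝 x) (𝓝 (dist x (ψ s (f s⁻¹)))) :=
        (continuous_id.dist continuous_const).tendsto x
      exact (ta.eventually_lt_const ha).and (tb.eventually_lt_const hb)
    exact h1.and h2
  obtain ⟨x', hx't, hx'P⟩ := mem_closure_iff_nhds.mp hx _ hev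
  obtain ⟨hx'near, hx'S⟩ := hx't
  -- modify the pseudo orbit at 1
  set f' : G → X := Function.update f 1 x' with hf'def
  have hf'1 : f' 1 = x' := Function.update_self _ _ _
  have hf'ne : ∀ g : G, g ≠ 1 → f' g = f g := fun g hg => Function.update_of_ne hg _ _
  have hf' : IsPseudoOrbit S ψ δ f' := by
    intro s hs g
    by_cases hg : g = 1
    · subst hg
      by_cases hs1 : s = 1
      · subst hs1
        rw [mul_one, hf'1, hψ.2.2 x', dist_self]
        -- need δ > 0 : from dist (f 1) (ψ 1 (f 1)) < δ
        have := hf 1 hs 1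
        rw [hψ.2.2] at this
        calc (0:ℝ) ≤ dist (f (1*1)) (f 1) := dist_nonneg
          _ < δ := this
      · rw [mul_one, hf'ne s hs1, hf'1]
        exact (hx'S s hs).1
    · rw [hf'ne g hg]
      by_cases hsg : s * g = 1
      · have hg' : g = s⁻¹ := eq_inv_of_mul_eq_one_right hsg
        rw [hsg, hf'1, hg']
        exact (hx'S s hs).2
      · rw [hf'ne _ hsg]
        exact hf s hs g
  obtain ⟨p, hp⟩ := hx'P ψ hψ hcl f' hf' hf'1
  refine ⟨p, fun g => ?_⟩
  by_cases hg : g = 1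
  · subst hg
    rw [hf1]
    calc dist x (ψ 1 p) ≤ dist x x' + dist x' (ψ 1 p) := dist_triangle _ _ _
      _ < (ε - ε') + ε' := by
          have := hp 1
          rw [hf'1] at this
          rw [dist_comm] at hx'near
          exact add_lt_add hx'near this
      _ = ε := by ring
  · have := hp g
    rw [hf'ne g hg] at this
    exact lt_of_lt_of_le this (le_of_lt h)

theorem stmt7 {G : Type*} [Group G] {X : Type*} [MetricSpace X] [CompactSpace X]
    [MeasurableSpace X] [BorelSpace X]
    (S : Set G) (hSfin : S.Finite) (hSsym : ∀ s ∈ S, s⁻¹ ∈ S)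
    (hSgen : Subgroup.closure S = ⊤)
    (φ : G → X → X) (hφ : ContGroupAction G X φ) :
    ∃ F : ℕ → ℕ → Set (ProbabilityMeasure X), (∀ n m : ℕ, IsClosed (F n m)) ∧
      {μ : ProbabilityMeasure X | CompatiblePSh S φ μ.toMeasure} =
        ⋂ n : ℕ, ⋃ m : ℕ, F n m := by
  set K : ℕ → ℕ → Set X :=
    fun n m => closure (PShSet S φ (1 / (m + 1 : ℝ)) (1 / (n + 2 : ℝ))) with hKdef
  refine ⟨fun n m => {μ : ProbabilityMeasure X | (1 : ENNReal) ≤ (μ : Measure X) (K n m)},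
    fun n m => aux_isClosed_prob_ge isClosed_closure, ?_⟩
  ext μ
  simp only [Set.mem_setOf_eq, Set.mem_iInter, Set.mem_iUnion]
  constructor
  · intro hμ n
    obtain ⟨δ, hδpos, hδ⟩ := hμ (1 / (n + 2 : ℝ)) (by positivity)
    obtain ⟨m, hm⟩ := exists_nat_one_div_lt hδpos
    refine ⟨m, ?_⟩
    by_contra hlt
    push_neg at hlt
    have hKc : 0 < (μ : Measure X) (K n m)ᶜ := by
      have hmeas : MeasurableSet (K n m) := isClosed_closure.measurableSet
      have : (μ : Measure X) (K n m)ᶜ = 1 - (μ : Measure X) (K n m) := by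
        rw [measure_compl hmeas (measure_ne_top _ _), measure_univ]
      rw [this]
      exact tsub_pos_of_lt hlt
    obtain ⟨y, hyc, hyP⟩ := hδ (K n m)ᶜ isClosed_closure.measurableSet.compl hKc
    exact hyc (subset_closure (PShSet_anti S φ hm.le hyP))
  · intro hμ ε hε
    obtain ⟨n, hn⟩ := exists_nat_one_div_lt hε
    obtain ⟨m, hm⟩ := hμ n
    refine ⟨1 / (m + 1 : ℝ), by positivity, fun A hA hApos => ?_⟩
    have hsub : K n m ⊆ PShSet S φ (1 / (m + 1 : ℝ)) ε := by
      refine (closure_PShSet_subset S hSfin φ ?_).trans (PShSet_mono S φ hn.le)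
      have : (0:ℝ) < n + 1 := by positivity
      rw [div_lt_div_iff₀ (by positivity) (by positivity)]
      linarith
    have hK1 : (μ : Measure X) (K n m) = 1 :=
      le_antisymm prob_le_one hm
    have hne : (A ∩ K n m).Nonempty := by
      by_contra hempty
      rw [Set.not_nonempty_iff_eq_empty] at hempty
      have hAc : A ⊆ (K n m)ᶜ := by
        intro a ha
        intro haK
        exact Set.eq_empty_iff_forall_notMem.mp hempty a ⟨ha, haK⟩
      have hKc0 : (μ : Measure X) (K n m)ᶜ = 0 := by
        rw [measure_compl isClosed_closure.measurableSet (measure_ne_top _ _), measure_univ, hK1,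
          tsub_self]
      have := measure_mono hAc (μ := (μ : Measure X))
      rw [hKc0] at this
      exact absurd (le_antisymm this zero_le) (ne_of_gt hApos)
    exact hne.mono (Set.inter_subset_inter_right A hsub)
end

section
/- If a Borel probability measure μ on a compact metric space X is compatible with the persistent shadowing property for the continuous action φ: G × X → X, then φ has the persistent shadowing property on supp(μ): for every ε > 0 there is δ > 0 such that every δ-pseudo orbit f of any continuous action ψ with d_S(φ,ψ) < δ satisfying f(e) ∈ supp(μ) can be ε-shadowed by a ψ-orbit. -/
open MeasureTheory

lemma unif_aux {G X : Type*} [MetricSpace X] [CompactSpace X] {S : Set G} (hS : S.Finite)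
    (φ : G → X → X) (hφ : ∀ s, Continuous (φ s)) {c : ℝ} (hc : 0 < c) :
    ∃ η > (0:ℝ), ∀ s ∈ S, ∀ a b : X, dist a b < η → dist (φ s a) (φ s b) < c := by
  refine Set.Finite.induction_on S hS
    ⟨1, one_pos, fun s hs => absurd hs (Set.notMem_empty s)⟩ ?_
  intro a t _ _ ih
  · obtain ⟨η₁, hη₁, H₁⟩ := ih
    have huc : UniformContinuous (φ a) := CompactSpace.uniformContinuous_of_continuous (hφ a)
    obtain ⟨η₂, hη₂, H₂⟩ := Metric.uniformContinuous_iff.mp huc c hc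
    refine ⟨min η₁ η₂, lt_min hη₁ hη₂, fun s hs x y hxy => ?_⟩
    rcases hs with rfl | hs
    · exact H₂ (lt_of_lt_of_le hxy (min_le_right _ _))
    · exact H₁ s hs x y (lt_of_lt_of_le hxy (min_le_left _ _))

theorem stmt9 {G : Type*} [Group G] {X : Type*} [MetricSpace X] [CompactSpace X]
    [MeasurableSpace X] [BorelSpace X]
    (S : Set G) (hSfin : S.Finite) (hSsym : ∀ s ∈ S, s⁻¹ ∈ S)
    (hSgen : Subgroup.closure S = ⊤)
    (φ : G → X → X) (hφ : ContGroupAction G X φ)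
    (μ : Measure X) [IsProbabilityMeasure μ]
    (hμ : CompatiblePSh S φ μ) :
    ∀ ε > (0:ℝ), ∃ δ > (0:ℝ), ∀ ψ : G → X → X, ContGroupAction G X ψ →
      CloseActions S φ ψ δ → ∀ f : G → X, IsPseudoOrbit S ψ δ f →
        f 1 ∈ MeasSupp μ → ∃ p : X, ∀ g : G, dist (f g) (ψ g p) < ε := by
  classical
  intro ε hε
  obtain ⟨δ₀, hδ₀, H⟩ := hμ (ε/2) (by linarith)
  obtain ⟨η, hη, Hη⟩ := unif_aux hSfin φ hφ.1 (c := δ₀/4) (by linarith)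
  refine ⟨min (δ₀/8) (min η (ε/2)), by positivity, ?_⟩
  intro ψ hψ hclose f hf hsupp
  set δ : ℝ := min (δ₀/8) (min η (ε/2)) with hδdef
  have hδpos : 0 < δ := by positivity
  have hδ1 : δ ≤ δ₀/8 := min_le_left _ _
  have hδ2 : δ ≤ η := le_trans (min_le_right _ _) (min_le_left _ _)
  have hδ3 : δ ≤ ε/2 := le_trans (min_le_right _ _) (min_le_right _ _)
  -- positive measure of the ball around f 1
  have hball : 0 < μ (Metric.ball (f 1) δ) :=
    hsupp _ Metric.isOpen_ball (Metric.mem_ball_self hδpos)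
  obtain ⟨x, hxball, hxP⟩ := H (Metric.ball (f 1) δ) measurableSet_ball hball
  have hxdist : dist x (f 1) < δ := Metric.mem_ball.mp hxball
  -- modified pseudo-orbit
  set f' : G → X := fun g => if g = 1 then x else f g with hf'def
  have hf'1 : f' 1 = x := by simp [hf'def]
  have hclose₀ : CloseActions S φ ψ δ₀ := fun s hs y =>
    lt_of_lt_of_le (hclose s hs y) (by linarith)
  have hf' : IsPseudoOrbit S ψ δ₀ f' := by
    intro s hs g
    by_cases hg : g = 1
    · subst hg
      have h1 : dist (f' (s * 1)) (f s) < δ := by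
        by_cases hs1 : s = 1
        · subst hs1; simpa [hf'def] using hxdist
        · simp [hf'def, hs1]; exact hδpos
      have h2 : dist (f s) (ψ s (f 1)) < δ := by
        have := hf s hs 1; rwa [mul_one] at this
      have h3 : dist (ψ s (f 1)) (ψ s x) < δ + δ₀/4 + δ := by
        calc dist (ψ s (f 1)) (ψ s x)
            ≤ dist (ψ s (f 1)) (φ s (f 1)) + dist (φ s (f 1)) (φ s x)
              + dist (φ s x) (ψ s x) := dist_triangle4 _ _ _ _
          _ < δ + δ₀/4 + δ := by
              have ha := hclose s hs (f 1)
              have hb := hclose s hs x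
              have hc : dist (φ s (f 1)) (φ s x) < δ₀/4 := by
                refine Hη s hs _ _ ?_
                rw [dist_comm] at hxdist; exact lt_of_lt_of_le hxdist hδ2
              rw [dist_comm] at ha
              linarith
      rw [hf'1]
      calc dist (f' (s * 1)) (ψ s x)
          ≤ dist (f' (s * 1)) (f s) + dist (f s) (ψ s (f 1))
            + dist (ψ s (f 1)) (ψ s x) := dist_triangle4 _ _ _ _
        _ < δ + δ + (δ + δ₀/4 + δ) := by linarith
        _ < δ₀ := by linarith
    · by_cases hsg : s * g = 1
      · have : f' (s * g) = x := by simp [hf'def, hsg]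
        rw [this]
        have h2 : dist (f 1) (ψ s (f g)) < δ := by
          have := hf s hs g; rwa [hsg] at this
        have : dist x (ψ s (f g)) ≤ dist x (f 1) + dist (f 1) (ψ s (f g)) :=
          dist_triangle _ _ _
        have hfg : f' g = f g := by simp [hf'def, hg]
        rw [hfg]
        linarith
      · have h1 : f' (s * g) = f (s * g) := by simp [hf'def, hsg]
        have h2 : f' g = f g := by simp [hf'def, hg]
        rw [h1, h2]
        exact lt_of_lt_of_le (hf s hs g) (by linarith)
  obtain ⟨p, hp⟩ := hxP ψ hψ hclose₀ f' hf' hf'1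
  refine ⟨p, fun g => ?_⟩
  by_cases hg : g = 1
  · subst hg
    have := hp 1
    rw [hf'1] at this
    calc dist (f 1) (ψ 1 p) ≤ dist (f 1) x + dist x (ψ 1 p) := dist_triangle _ _ _
      _ < δ + ε/2 := by rw [dist_comm] at hxdist; linarith
      _ ≤ ε := by linarith
  · have := hp g
    rw [show f' g = f g by simp [hf'def, hg]] at this
    linarith
end
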